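/- Let D ≥ 1, let |ψ⟩ be a unit vector in ℂ^D and let ε ≥ 0. Let σ be any D×D density matrix satisfying ⟨ψ| σ |ψ⟩ ≥ 1 − ε. Then σ ⪯ |ψ⟩⟨ψ| + √ε · I_D in the Loewner order, i.e. |ψ⟩⟨ψ| + √ε·I_D − σ is positive semidefinite. -/

import Mathlib

open Matrix ComplexOrder

private lemma key_real (e A S P Q C : ℝ) (he : 0 ≤ e) (hA : 0 ≤ A) (hS : 0 ≤ S)
    (hP0 : 0 ≤ P) (hP1 : P ≤ 1) (hPe : 1 - e^2 ≤ P)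
    (hQ0 : 0 ≤ Q) (hQ : Q ≤ (1-P)*S) (hC : 0 ≤ C) (hC2 : C^2 ≤ P*Q) :
    A^2*P + 2*A*C + Q ≤ A^2*(1+e) + e*S := by
  have h1Pe : 1 - P ≤ e := by
    rcases le_total e 1 with h | h
    · nlinarith
    · nlinarith
  set u := A^2*(1+e-P) with hu_def
  have hu : 0 ≤ u := by nlinarith
  have hv : 0 ≤ e*S - Q := by nlinarith
  have hdet : P*Q ≤ (1+e-P)*(e*S-Q) := by nlinarith
  have huv : (A*C)^2 ≤ u*(e*S-Q) := by nlinarith [sq_nonneg A, sq_nonneg C]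
  have h2AC : 2*(A*C) ≤ u + (e*S-Q) := by
    nlinarith [sq_nonneg (u - (e*S-Q)), mul_nonneg hA hC]
  nlinarith

private noncomputable def toE {D : ℕ} (v : Fin D → ℂ) : EuclideanSpace ℂ (Fin D) :=
  (WithLp.equiv 2 (Fin D → ℂ)).symm v

private lemma inner_toE {D : ℕ} (u v : Fin D → ℂ) :
    (inner ℂ (toE u) (toE v) : ℂ) = star u ⬝ᵥ v := by
  rw [EuclideanSpace.inner_eq_star_dotProduct, dotProduct_comm]; rfl

private lemma toE_add {D : ℕ} (u v : Fin D → ℂ) : toE (u + v) = toE u + toE v := rfl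

private lemma toE_smul {D : ℕ} (c : ℂ) (v : Fin D → ℂ) : toE (c • v) = c • toE v := rfl

private lemma inner_self_complex {E : Type*} [NormedAddCommGroup E] [InnerProductSpace ℂ E]
    (x : E) : (inner ℂ x x : ℂ) = ((‖x‖^2 : ℝ) : ℂ) := by
  rw [inner_self_eq_norm_sq_to_K]; norm_cast

private lemma norm_sq_toE {D : ℕ} (v : Fin D → ℂ) :
    ‖toE v‖^2 = ∑ i, ‖v i‖^2 := by
  rw [← PiLp.norm_sq_eq_of_L2]
  rfl

private lemma sum_orthonormal_le_trace {D : ℕ} (B : Matrix (Fin D) (Fin D) ℂ)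
    {ι : Type} [Fintype ι] (f : ι → (Fin D → ℂ))
    (hf : Orthonormal ℂ (fun k => toE (f k))) :
    ∑ k, ‖toE (B *ᵥ f k)‖ ^ 2 ≤ (Bᴴ * B).trace.re := by
  have tr : (Bᴴ * B).trace.re = ∑ j, ∑ i, ‖B i j‖^2 := by
    simp [Matrix.trace, Matrix.mul_apply, Matrix.diag, Complex.re_sum,
      Matrix.conjTranspose_apply, ← Complex.normSq_eq_norm_sq, Complex.normSq_apply]
  rw [tr, Finset.sum_comm]
  have step : ∀ k, ‖toE (B *ᵥ f k)‖^2 = ∑ i, ‖(inner ℂ (toE (star (B i))) (toE (f k)) : ℂ)‖^2 := by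
    intro k
    rw [norm_sq_toE]
    congr 1; ext i
    rw [inner_toE, star_star]
    rfl
  calc ∑ k, ‖toE (B *ᵥ f k)‖^2 = ∑ i, ∑ k, ‖(inner ℂ (toE (star (B i))) (toE (f k)) : ℂ)‖^2 := by
        rw [← Finset.sum_comm]; exact Finset.sum_congr rfl fun k _ => step k
    _ ≤ ∑ i, ‖toE (star (B i))‖^2 := by
        refine Finset.sum_le_sum fun i _ => ?_
        have := hf.sum_inner_products_le (s := Finset.univ) (toE (star (B i)))
        simp_rw [norm_inner_symm]
        simpa using this
    _ = ∑ i, ∑ j, ‖B i j‖^2 := by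
        refine Finset.sum_congr rfl fun i _ => ?_
        rw [norm_sq_toE]
        simp

private lemma vecMulVec_mulVec' {D : ℕ} (ψ v x : Fin D → ℂ) :
    vecMulVec ψ v *ᵥ x = (v ⬝ᵥ x) • ψ := by
  ext i
  simp only [mulVec, vecMulVec_apply, dotProduct, Pi.smul_apply, smul_eq_mul, Finset.sum_mul,
    Finset.mul_sum]
  exact Finset.sum_congr rfl fun j _ => by ring

/-- Any state `σ` that is `ε`-close in fidelity to the unit vector `ψ`
satisfies `σ ⪯ |ψ⟩⟨ψ| + √ε·I` in the Loewner order (the case `μ = 0`). -/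
theorem operator_bound_for_eps_close_states_mu_zero
    (D : ℕ) (hD : 1 ≤ D) (ψ : Fin D → ℂ) (hψ : star ψ ⬝ᵥ ψ = 1)
    (ε : ℝ) (hε : 0 ≤ ε)
    (σ : Matrix (Fin D) (Fin D) ℂ) (hσ : σ.PosSemidef) (hσtr : σ.trace = 1)
    (hfid : 1 - ε ≤ (star ψ ⬝ᵥ σ *ᵥ ψ).re) :
    (vecMulVec ψ (star ψ) + Real.sqrt ε • (1 : Matrix (Fin D) (Fin D) ℂ) - σ).PosSemidef := by
  set e := Real.sqrt ε with he_def
  have he : 0 ≤ e := Real.sqrt_nonneg ε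
  have he2 : e^2 = ε := Real.sq_sqrt hε
  obtain ⟨B, rfl⟩ : ∃ B : Matrix (Fin D) (Fin D) ℂ, σ = Bᴴ * B := by
    open scoped MatrixOrder in
    obtain ⟨B, hB⟩ := CStarAlgebra.nonneg_iff_eq_star_mul_self.mp hσ.nonneg
    exact ⟨B, hB⟩
  have hquad : ∀ u v : Fin D → ℂ,
      star u ⬝ᵥ (Bᴴ * B) *ᵥ v = (inner ℂ (toE (B *ᵥ u)) (toE (B *ᵥ v)) : ℂ) := by
    intro u v
    rw [inner_toE, ← mulVec_mulVec, dotProduct_mulVec, ← star_mulVec]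
  -- norm of ψ
  have hψn : ‖toE ψ‖ = 1 := by
    have h1 : (inner ℂ (toE ψ) (toE ψ) : ℂ) = 1 := by rw [inner_toE, hψ]
    rw [inner_self_complex] at h1
    have h2 : ‖toE ψ‖^2 = 1 := by exact_mod_cast h1
    nlinarith [norm_nonneg (toE ψ)]
  set P := ‖toE (B *ᵥ ψ)‖^2 with hP_def
  have hP0 : 0 ≤ P := sq_nonneg _
  have hPfid : 1 - ε ≤ P := by
    rw [hquad ψ ψ, inner_self_complex, Complex.ofReal_re] at hfid
    exact hfid
  have htrre : (Bᴴ * B).trace.re = 1 := by rw [hσtr]; simp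
  have hP1 : P ≤ 1 := by
    have hon : Orthonormal ℂ (fun _ : Fin 1 => toE ψ) := by
      rw [orthonormal_iff_ite]
      intro i j
      rw [Subsingleton.elim i j, if_pos rfl, inner_toE, hψ]
    have := sum_orthonormal_le_trace B (fun _ : Fin 1 => ψ) hon
    rw [htrre] at this
    rwa [Fin.sum_univ_one] at this
  refine posSemidef_iff_dotProduct_mulVec.mpr ⟨?_, ?_⟩
  · -- Hermitian
    have h1 : (vecMulVec ψ (star ψ)).IsHermitian := by
      ext i j
      simp [conjTranspose_apply, vecMulVec_apply, mul_comm]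
    have h2 : (e • (1 : Matrix (Fin D) (Fin D) ℂ)).IsHermitian := by
      show _ᴴ = _
      rw [conjTranspose_smul, conjTranspose_one, star_trivial]
    have h3 : (Bᴴ * B).IsHermitian := isHermitian_conjTranspose_mul_self B
    exact (h1.add h2).sub h3
  · intro x
    set a := star ψ ⬝ᵥ x with ha_def
    set y := x - a • ψ with hy_def
    have hay : star ψ ⬝ᵥ y = 0 := by
      simp [hy_def, dotProduct_sub, ← ha_def, hψ]
    have hxsum : x = a • ψ + y := by rw [hy_def]; ring_nf
    set A := ‖a‖ with hA_def
    set S := ‖toE y‖^2 with hS_def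
    set Q := ‖toE (B *ᵥ y)‖^2 with hQ_def
    set C := ‖(inner ℂ (toE (B *ᵥ ψ)) (toE (B *ᵥ y)) : ℂ)‖ with hC_def
    have hA0 : 0 ≤ A := norm_nonneg _
    have hS0 : 0 ≤ S := sq_nonneg _
    have hQ0 : 0 ≤ Q := sq_nonneg _
    have hC0 : 0 ≤ C := norm_nonneg _
    have hC2 : C^2 ≤ P * Q := by
      have := norm_inner_le_norm (𝕜 := ℂ) (toE (B *ᵥ ψ)) (toE (B *ᵥ y))
      nlinarith [norm_nonneg (toE (B *ᵥ ψ)), norm_nonneg (toE (B *ᵥ y))]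
    -- the trace bound Q ≤ (1-P) * S
    have hQS : Q ≤ (1 - P) * S := by
      by_cases hy0 : y = 0
      · simp [hQ_def, hS_def, hy0, toE, mulVec_zero]
      · have hyE : toE y ≠ 0 := by
          intro h
          exact hy0 ((WithLp.equiv 2 (Fin D → ℂ)).symm.injective h)
        have hny : 0 < ‖toE y‖ := norm_pos_iff.mpr hyE
        set c : ℂ := (‖toE y‖ : ℂ)⁻¹ with hc_def
        have hcn : ‖c‖ = ‖toE y‖⁻¹ := by
          rw [hc_def, norm_inv, Complex.norm_real, Real.norm_of_nonneg hny.le]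
        have i00 : (inner ℂ (toE ψ) (toE ψ) : ℂ) = 1 := by rw [inner_toE, hψ]
        have i01 : (inner ℂ (toE ψ) (toE (c • y)) : ℂ) = 0 := by
          rw [inner_toE, dotProduct_smul, hay, smul_zero]
        have i10 : (inner ℂ (toE (c • y)) (toE ψ) : ℂ) = 0 := by
          have h := congrArg (starRingEnd ℂ) i01
          rwa [inner_conj_symm, map_zero] at h
        have i11 : (inner ℂ (toE (c • y)) (toE (c • y)) : ℂ) = 1 := by
          rw [toE_smul, inner_smul_left, inner_smul_right, inner_self_complex,
            hc_def, map_inv₀, Complex.conj_ofReal]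
          rw [← Complex.ofReal_inv, ← Complex.ofReal_mul, ← Complex.ofReal_mul]
          rw [show ‖toE y‖⁻¹ * (‖toE y‖⁻¹ * ‖toE y‖^2) = 1 by field_simp [pow_two]]
          norm_num
        have n11 : ‖toE (c • y)‖ = 1 := by
          have h1 := i11
          rw [inner_self_complex] at h1
          have h2 : ‖toE (c • y)‖^2 = 1 := by exact_mod_cast h1
          nlinarith [norm_nonneg (toE (c • y))]
        have hon : Orthonormal ℂ (fun k : Fin 2 => toE (![ψ, c • y] k)) := by
          rw [orthonormal_iff_ite]
          intro i j
          fin_cases i <;> fin_cases j <;>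
            simp [Matrix.cons_val_zero, Matrix.cons_val_one, Matrix.head_cons,
              i00, i01, i10, i11, hψn, n11]
        have := sum_orthonormal_le_trace B (![ψ, c • y]) hon
        rw [htrre] at this
        have hsum : ‖toE (B *ᵥ ψ)‖^2 + ‖toE (B *ᵥ (c • y))‖^2 ≤ 1 := by
          simpa [Fin.sum_univ_two] using this
        have hBcy : ‖toE (B *ᵥ (c • y))‖^2 = ‖toE y‖⁻¹^2 * Q := by
          rw [mulVec_smul, toE_smul, norm_smul, hcn, mul_pow, hQ_def]
        rw [hBcy] at hsum
        have hSpos : 0 < S := by positivity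
        have hP_ : P + S⁻¹ * Q ≤ 1 := by
          rw [hS_def, ← inv_pow]
          exact hsum
        have h1 : S⁻¹ * Q ≤ 1 - P := by linarith
        have h2 : S * (S⁻¹ * Q) ≤ S * (1 - P) := mul_le_mul_of_nonneg_left h1 hS0
        rw [← mul_assoc, mul_inv_cancel₀ hSpos.ne', one_mul] at h2
        linarith
    -- norm splits
    have hx2 : ‖toE x‖^2 = A^2 + S := by
      rw [hxsum, toE_add, toE_smul, norm_add_sq (𝕜 := ℂ)]
      have hinner : (inner ℂ (a • toE ψ) (toE y) : ℂ) = 0 := by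
        rw [inner_smul_left, inner_toE, hay, mul_zero]
      rw [hinner]
      simp [norm_smul, hψn, mul_pow, hA_def, hS_def]
    have hBx : ‖toE (B *ᵥ x)‖^2 ≤ A^2 * P + 2*A*C + Q := by
      have hBxs : toE (B *ᵥ x) = a • toE (B *ᵥ ψ) + toE (B *ᵥ y) := by
        conv_lhs => rw [hxsum, mulVec_add, mulVec_smul, toE_add, toE_smul]
      rw [hBxs, norm_add_sq (𝕜 := ℂ)]
      have h1 : ‖a • toE (B *ᵥ ψ)‖^2 = A^2 * P := by
        rw [norm_smul, mul_pow]
      have h2 : RCLike.re (inner ℂ (a • toE (B *ᵥ ψ)) (toE (B *ᵥ y)) : ℂ) ≤ A * C := by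
        calc RCLike.re (inner ℂ (a • toE (B *ᵥ ψ)) (toE (B *ᵥ y)) : ℂ)
            ≤ ‖(inner ℂ (a • toE (B *ᵥ ψ)) (toE (B *ᵥ y)) : ℂ)‖ := RCLike.re_le_norm _
          _ = A * C := by
              rw [inner_smul_left, norm_mul, hC_def, hA_def, RCLike.norm_conj]
      linarith [h1, h2]
    -- final computation of the quadratic form
    have hval : star x ⬝ᵥ (vecMulVec ψ (star ψ) + e • 1 - Bᴴ * B) *ᵥ x
        = ((A^2 + e * ‖toE x‖^2 - ‖toE (B *ᵥ x)‖^2 : ℝ) : ℂ) := by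
      rw [sub_mulVec, add_mulVec, dotProduct_sub, dotProduct_add]
      have t1 : star x ⬝ᵥ vecMulVec ψ (star ψ) *ᵥ x = ((A^2 : ℝ) : ℂ) := by
        rw [vecMulVec_mulVec', dotProduct_smul, ← ha_def]
        have : star x ⬝ᵥ ψ = star a := by rw [star_dotProduct, ha_def]
        rw [this]
        simp only [smul_eq_mul, RCLike.star_def, Complex.mul_conj, Complex.normSq_eq_norm_sq,
          hA_def]
      have t2 : star x ⬝ᵥ (e • (1 : Matrix (Fin D) (Fin D) ℂ)) *ᵥ x
          = ((e * ‖toE x‖^2 : ℝ) : ℂ) := by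
        rw [smul_mulVec, one_mulVec, dotProduct_smul]
        have : star x ⬝ᵥ x = ((‖toE x‖^2 : ℝ) : ℂ) := by
          rw [← inner_toE, inner_self_complex]
        rw [this]
        simp [Complex.real_smul]
      have t3 : star x ⬝ᵥ (Bᴴ * B) *ᵥ x = ((‖toE (B *ᵥ x)‖^2 : ℝ) : ℂ) := by
        rw [hquad, inner_self_complex]
      rw [t1, t2, t3]
      push_cast; ring
    rw [hval, Complex.zero_le_real]
    have hkey := key_real e A S P Q C he hA0 hS0 hP0 hP1 (by rw [he2]; exact hPfid)
      hQ0 hQS hC0 hC2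
    rw [hx2]
    nlinarith [hBx, hkey]
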